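/- For every integer j ≥ 2 there exist a finite metric space (X, c), a point μ ∈ X, and a subset R ⊆ X with |R| = j, such that cost({μ}) = min_{x ∈ X} cost({x}) (μ is an optimal 1-median) and for every r ∈ R, cost(R \ {r}) − cost(R) ≥ cost({μ})/(2j). In other words, the single-step bound min_{r ∈ R} cost(R \ {r}) − cost(R) ≤ 2·cost(M)/(|R| − 1) for 1-element M is tight up to a constant factor. -/

import Mathlib

/-- `kmDist x F` is the distance from a point `x` to a nonempty finite set `F`,
i.e. `min_{f ∈ F} dist x f` (junk value `0` if `F = ∅`). -/
noncomputable def kmDist {X : Type*} [MetricSpace X] (x : X) (F : Finset X) : ℝ :=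
  if h : F.Nonempty then F.inf' h (fun f => dist x f) else 0

/-- `kmCost F = ∑_{x ∈ X} c(x, F)`, the total service cost of the facility set `F`. -/
noncomputable def kmCost {X : Type*} [MetricSpace X] [Fintype X] (F : Finset X) : ℝ :=
  ∑ x : X, kmDist x F

/-- The discrete metric on `Fin n`. -/
noncomputable def discMS (n : ℕ) : MetricSpace (Fin n) where
  dist x y := if x = y then 0 else 1
  dist_self x := if_pos rfl
  dist_comm x y := by simp only [eq_comm]
  dist_triangle x y z := by
    show (if x = z then (0:ℝ) else 1) ≤ (if x = y then 0 else 1) + (if y = z then 0 else 1)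
    split_ifs with h1 h2 h3 <;> norm_num <;> simp_all
  eq_of_dist_eq_zero := by
    intro x y h
    by_contra hne
    simp [hne] at h

theorem kmDist_nonneg {X : Type*} [MetricSpace X] (x : X) (F : Finset X) : 0 ≤ kmDist x F := by
  unfold kmDist
  split_ifs with h
  · obtain ⟨f, hf, hfe⟩ := Finset.exists_mem_eq_inf' h (fun f => dist x f)
    rw [hfe]; exact dist_nonneg
  · exact le_refl _

theorem kmDist_mem_zero {X : Type*} [MetricSpace X] {x : X} {F : Finset X} (hx : x ∈ F) :
    kmDist x F = 0 := by
  have hne : F.Nonempty := ⟨x, hx⟩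
  have h1 : kmDist x F ≤ 0 := by
    unfold kmDist
    rw [dif_pos hne]
    exact le_of_le_of_eq (Finset.inf'_le (fun f => dist x f) hx) (dist_self x)
  linarith [kmDist_nonneg x F]

theorem kmDist_singleton {X : Type*} [MetricSpace X] (x y : X) :
    kmDist x ({y} : Finset X) = dist x y := by
  unfold kmDist
  rw [dif_pos (Finset.singleton_nonempty y)]
  simp

/-- Tightness of the single-step bound: for every `j ≥ 2` there is a finite metric space,
an optimal 1-median `μ`, and a `j`-element set `R` such that removing *any* `r ∈ R`
increases the cost by at least `cost({μ})/(2j)`. -/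
theorem rgreedy_single_step_tight (j : ℕ) (hj : 2 ≤ j) :
    ∃ (n : ℕ) (mX : MetricSpace (Fin n)) (μ : Fin n) (R : Finset (Fin n)),
      R.card = j ∧
      (∀ x : Fin n, @kmCost _ mX _ ({μ} : Finset (Fin n)) ≤ @kmCost _ mX _ ({x} : Finset (Fin n))) ∧
      (∀ r ∈ R,
        @kmCost _ mX _ ({μ} : Finset (Fin n)) / (2 * (j : ℝ))
          ≤ @kmCost _ mX _ (R.erase r) - @kmCost _ mX _ R) := by
  have hjpos : 0 < j := by omega
  have hcost : ∀ y : Fin j, @kmCost _ (discMS j) _ ({y} : Finset (Fin j)) = (j : ℝ) - 1 := by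
    intro y
    unfold kmCost
    have : ∀ x : Fin j, @kmDist _ (discMS j) x ({y} : Finset (Fin j))
        = if x = y then (0:ℝ) else 1 := fun x => @kmDist_singleton _ (discMS j) x y
    rw [Finset.sum_congr rfl (fun x _ => this x)]
    rw [Finset.sum_ite, Finset.sum_const, Finset.sum_const]
    have hc : (Finset.univ.filter (fun x : Fin j => ¬ x = y)).card = j - 1 := by
      simp only [Finset.filter_not, Finset.filter_eq', Finset.mem_univ, if_pos,
        Finset.card_sdiff_of_subset (Finset.subset_univ _), Finset.card_univ, Fintype.card_fin,
        Finset.card_singleton]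
    rw [hc]
    have : (1:ℕ) ≤ j := hjpos
    rw [smul_zero, zero_add, nsmul_eq_mul, mul_one, Nat.cast_sub this]
    push_cast
    ring
  refine ⟨j, discMS j, ⟨0, hjpos⟩, Finset.univ, by simp, ?_, ?_⟩
  · intro x
    rw [hcost, hcost]
  · intro r _
    have hRcost : @kmCost _ (discMS j) _ (Finset.univ : Finset (Fin j)) = 0 := by
      unfold kmCost
      exact Finset.sum_eq_zero fun x _ =>
        @kmDist_mem_zero _ (discMS j) x Finset.univ (Finset.mem_univ x)
    have hEcost : @kmCost _ (discMS j) _ ((Finset.univ : Finset (Fin j)).erase r) = 1 := by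
      unfold kmCost
      have hne : ((Finset.univ : Finset (Fin j)).erase r).Nonempty := by
        rw [← Finset.card_pos, Finset.card_erase_of_mem (Finset.mem_univ r), Finset.card_univ,
          Fintype.card_fin]
        omega
      have hval : ∀ x : Fin j, @kmDist _ (discMS j) x ((Finset.univ : Finset (Fin j)).erase r)
          = if x = r then (1:ℝ) else 0 := by
        intro x
        by_cases hx : x = r
        · subst hx
          simp only [if_pos rfl]
          unfold kmDist
          rw [dif_pos hne]
          apply le_antisymm
          · obtain ⟨f, hf, hfe⟩ := Finset.exists_mem_eq_inf' hne (fun f => @dist _ (discMS j).toDist x f)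
            rw [hfe]
            have hxf : x ≠ f := fun h => (Finset.ne_of_mem_erase hf) h.symm
            show (if x = f then (0:ℝ) else 1) ≤ 1
            simp [hxf]
          · apply Finset.le_inf'
            intro f hf
            have hxf : x ≠ f := fun h => (Finset.ne_of_mem_erase hf) h.symm
            show (1:ℝ) ≤ (if x = f then (0:ℝ) else 1)
            simp [hxf]
        · rw [if_neg hx]
          exact @kmDist_mem_zero _ (discMS j) x _ (Finset.mem_erase.mpr ⟨hx, Finset.mem_univ x⟩)
      rw [Finset.sum_congr rfl (fun x _ => hval x)]
      rw [Finset.sum_ite_eq' Finset.univ r (fun _ => (1:ℝ))]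
      simp
    have hcostμ : @kmCost _ (discMS j) _ ({(⟨0, hjpos⟩ : Fin j)} : Finset (Fin j)) = (j : ℝ) - 1 :=
      hcost _
    rw [hRcost, hEcost, hcostμ]
    have hjR : (2:ℝ) ≤ (j:ℝ) := by exact_mod_cast hj
    rw [div_le_iff₀ (by linarith)]
    linarith
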